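/- Let p ≥ 2 and ε ≥ 0. For all vectors X, Y ∈ ℝ^k, one has ((ε² + |X|²)^((p-2)/2) X − (ε² + |Y|²)^((p-2)/2) Y) · (X − Y) ≥ C(p) (ε² + |X|² + |Y|²)^((p-2)/2) |X − Y|², where C(p) > 0 depends only on p. -/

import Mathlib

/-- Monotonicity inequality for the ε-perturbed p-Laplacian vector field,
with constant depending only on p (uniform in ε ≥ 0 and the dimension). -/
theorem stmt_0 (p : ℝ) (hp : 2 ≤ p) :
    ∃ C : ℝ, 0 < C ∧ ∀ (k : ℕ) (ε : ℝ), 0 ≤ ε →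
      ∀ X Y : EuclideanSpace ℝ (Fin k),
        C * (ε ^ 2 + ‖X‖ ^ 2 + ‖Y‖ ^ 2) ^ ((p - 2) / 2) * ‖X - Y‖ ^ 2 ≤
          (inner ℝ ((ε ^ 2 + ‖X‖ ^ 2) ^ ((p - 2) / 2) • X - (ε ^ 2 + ‖Y‖ ^ 2) ^ ((p - 2) / 2) • Y)
            (X - Y) : ℝ) := by
  set α := (p - 2) / 2 with hαdef
  have hα0 : 0 ≤ α := by
    have : 0 ≤ p - 2 := by linarith
    positivity
  refine ⟨(2 : ℝ) ^ (-α) / 2, by positivity, ?_⟩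
  intro k ε hε X Y
  set s : ℝ := ε ^ 2 + ‖X‖ ^ 2 with hsdef
  set t : ℝ := ε ^ 2 + ‖Y‖ ^ 2 with htdef
  set M : ℝ := ε ^ 2 + ‖X‖ ^ 2 + ‖Y‖ ^ 2 with hMdef
  have hs : (0 : ℝ) ≤ s := by positivity
  have ht : (0 : ℝ) ≤ t := by positivity
  have hM : (0 : ℝ) ≤ M := by positivity
  have hinner : (inner ℝ (s ^ α • X - t ^ α • Y) (X - Y) : ℝ)
      = (s ^ α - t ^ α) * (‖X‖ ^ 2 - ‖Y‖ ^ 2) / 2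
        + (s ^ α + t ^ α) * ‖X - Y‖ ^ 2 / 2 := by
    have h1 : (inner ℝ X Y : ℝ) = (‖X‖ ^ 2 + ‖Y‖ ^ 2 - ‖X - Y‖ ^ 2) / 2 := by
      have := @norm_sub_sq_real _ _ _ X Y
      linarith
    have h2 : (inner ℝ (s ^ α • X - t ^ α • Y) (X - Y) : ℝ)
        = s ^ α * ‖X‖ ^ 2 + t ^ α * ‖Y‖ ^ 2
          - (s ^ α + t ^ α) * (inner ℝ X Y : ℝ) := by
      simp only [inner_sub_left, inner_sub_right, real_inner_smul_left,
        real_inner_self_eq_norm_sq, real_inner_comm Y X]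
      ring
    rw [h2, h1]; ring
  rw [hinner]
  -- the first term is nonnegative
  have hmono : 0 ≤ (s ^ α - t ^ α) * (‖X‖ ^ 2 - ‖Y‖ ^ 2) := by
    have hst : ‖X‖ ^ 2 - ‖Y‖ ^ 2 = s - t := by rw [hsdef, htdef]; ring
    rw [hst]
    rcases le_total s t with h | h
    · have := Real.rpow_le_rpow hs h hα0
      nlinarith
    · have := Real.rpow_le_rpow ht h hα0
      nlinarith
  -- lower bound on s^α + t^α
  have hsum : (2 : ℝ) ^ (-α) * M ^ α ≤ s ^ α + t ^ α := by
    have hmax : M / 2 ≤ max s t := by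
      have hMst : M ≤ s + t := by
        rw [hMdef, hsdef, htdef]; nlinarith [sq_nonneg ε]
      rcases le_total s t with h | h
      · rw [max_eq_right h]; linarith
      · rw [max_eq_left h]; linarith
    have h1 : (M / 2) ^ α ≤ (max s t) ^ α :=
      Real.rpow_le_rpow (by positivity) hmax hα0
    have h2 : (max s t) ^ α ≤ s ^ α + t ^ α := by
      rcases le_total s t with h | h
      · rw [max_eq_right h]
        have := Real.rpow_nonneg hs α; linarith
      · rw [max_eq_left h]
        have := Real.rpow_nonneg ht α; linarith
    have h3 : (M / 2) ^ α = (2 : ℝ) ^ (-α) * M ^ α := by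
      rw [Real.rpow_neg (by norm_num), div_eq_mul_inv, Real.mul_rpow hM (by norm_num),
        Real.inv_rpow (by norm_num)]
      ring
    linarith [h3 ▸ h1]
  have hD : (0 : ℝ) ≤ ‖X - Y‖ ^ 2 := by positivity
  calc (2 : ℝ) ^ (-α) / 2 * M ^ α * ‖X - Y‖ ^ 2
      = ((2 : ℝ) ^ (-α) * M ^ α) * ‖X - Y‖ ^ 2 / 2 := by ring
    _ ≤ (s ^ α + t ^ α) * ‖X - Y‖ ^ 2 / 2 := by
        apply div_le_div_of_nonneg_right ?_ (by norm_num) |>.trans_eq rfl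
        exact mul_le_mul_of_nonneg_right hsum hD
    _ ≤ (s ^ α - t ^ α) * (‖X‖ ^ 2 - ‖Y‖ ^ 2) / 2
        + (s ^ α + t ^ α) * ‖X - Y‖ ^ 2 / 2 := by linarith
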